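/- Let T be a string of length n ≥ 1 over a finite alphabet A, and let T⁻ be the string of length n−1 obtained by deleting one character from T at an arbitrary position. Then |n·H₀(T) − (n−1)·H₀(T⁻)| ≤ 4 log₂ n + 3 log₂ |A|. -/

import Mathlib

open Finset

noncomputable def H0 {A : Type*} [Fintype A] [DecidableEq A] (T : List A) : ℝ :=
  -∑ c : A, ((T.count c : ℝ) / T.length) * Real.logb 2 ((T.count c : ℝ) / T.length)

lemma sum_count_eq {A : Type*} [Fintype A] [DecidableEq A] (T : List A) :
    ∑ c : A, T.count c = T.length := by
  induction T with
  | nil => simp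
  | cons a l ih => simp [List.count_cons, Finset.sum_add_distrib, ih]

lemma nH0_eq {A : Type*} [Fintype A] [DecidableEq A] (T : List A) (h : T.length ≠ 0) :
    (T.length : ℝ) * H0 T =
      (T.length : ℝ) * Real.logb 2 T.length -
        ∑ c : A, (T.count c : ℝ) * Real.logb 2 (T.count c) := by
  have hn : (T.length : ℝ) ≠ 0 := Nat.cast_ne_zero.mpr h
  have key : ∀ c : A, (T.length : ℝ) * (((T.count c : ℝ) / T.length) *
      Real.logb 2 ((T.count c : ℝ) / T.length)) =
      (T.count c : ℝ) * Real.logb 2 (T.count c) - (T.count c : ℝ) * Real.logb 2 T.length := by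
    intro c
    rcases eq_or_ne (T.count c) 0 with hc | hc
    · simp [hc]
    · have hc' : (T.count c : ℝ) ≠ 0 := Nat.cast_ne_zero.mpr hc
      rw [Real.logb_div hc' hn]
      field_simp
  have hsum : ∑ c : A, (T.count c : ℝ) = T.length := by
    exact_mod_cast congrArg (Nat.cast (R := ℝ)) (sum_count_eq T)
  rw [H0, mul_neg, Finset.mul_sum]
  rw [Finset.sum_congr rfl fun c _ => key c, Finset.sum_sub_distrib, ← Finset.sum_mul, hsum]
  ring

lemma g_nonneg (k : ℕ) (hk : 1 ≤ k) :
    0 ≤ (k : ℝ) * Real.logb 2 k - ((k : ℝ) - 1) * Real.logb 2 ((k : ℝ) - 1) := by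
  rcases eq_or_lt_of_le hk with h1 | h2
  · simp [← h1]
  · have h2 : (2 : ℕ) ≤ k := h2
    have hk2 : (2 : ℝ) ≤ (k : ℝ) := by exact_mod_cast h2
    have hk1 : (1 : ℝ) ≤ (k : ℝ) - 1 := by linarith
    have hle : ((k : ℝ) - 1) * Real.logb 2 ((k : ℝ) - 1) ≤ (k : ℝ) * Real.logb 2 k := by
      apply mul_le_mul (by linarith)
        (Real.logb_le_logb_of_le (by norm_num) (by linarith) (by linarith))
        (Real.logb_nonneg (by norm_num) hk1) (by positivity)
    linarith

lemma g_le (k : ℕ) (hk : 1 ≤ k) :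
    (k : ℝ) * Real.logb 2 k - ((k : ℝ) - 1) * Real.logb 2 ((k : ℝ) - 1) ≤
      Real.logb 2 k + 2 := by
  rcases eq_or_lt_of_le hk with h1 | h2
  · simp [← h1]
  · have h2 : (2 : ℕ) ≤ k := h2
    have hk2 : (2 : ℝ) ≤ (k : ℝ) := by exact_mod_cast h2
    have hk1 : (1 : ℝ) ≤ (k : ℝ) - 1 := by linarith
    have hpos : (0 : ℝ) < (k : ℝ) - 1 := by linarith
    have hlog : Real.log (k : ℝ) - Real.log ((k : ℝ) - 1) ≤ 1 / ((k : ℝ) - 1) := by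
      rw [← Real.log_div (by positivity) (by positivity)]
      have h3 := Real.log_le_sub_one_of_pos (x := (k : ℝ) / ((k : ℝ) - 1)) (by positivity)
      have heq : (k : ℝ) / ((k : ℝ) - 1) - 1 = 1 / ((k : ℝ) - 1) := by field_simp; ring
      linarith
    have hlog2 : (0.6931471803 : ℝ) < Real.log 2 := Real.log_two_gt_d9
    have key : ((k : ℝ) - 1) * (Real.logb 2 k - Real.logb 2 ((k : ℝ) - 1)) ≤ 2 := by
      rw [Real.logb, Real.logb, div_sub_div_same, ← mul_div_assoc,
        div_le_iff₀ (by linarith)]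
      have h1 : ((k : ℝ) - 1) * (Real.log (k : ℝ) - Real.log ((k : ℝ) - 1)) ≤ 1 := by
        calc ((k : ℝ) - 1) * (Real.log (k : ℝ) - Real.log ((k : ℝ) - 1))
            ≤ ((k : ℝ) - 1) * (1 / ((k : ℝ) - 1)) :=
              mul_le_mul_of_nonneg_left hlog (by linarith)
          _ = 1 := by field_simp
      linarith
    nlinarith [key]

theorem stmt1 {A : Type*} [Fintype A] [DecidableEq A]
    (T T₁ T₂ : List A) (c : A)
    (hT : T = T₁ ++ c :: T₂) (hn : 1 ≤ T.length) :
    |(T.length : ℝ) * H0 T - ((T.length : ℝ) - 1) * H0 (T₁ ++ T₂)| ≤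
      4 * Real.logb 2 T.length + 3 * Real.logb 2 (Fintype.card A) := by
  have hcardA : 1 ≤ Fintype.card A := Fintype.card_pos_iff.mpr ⟨c⟩
  have hlogA : 0 ≤ Real.logb 2 (Fintype.card A) :=
    Real.logb_nonneg (by norm_num) (by exact_mod_cast hcardA)
  set L := T₁ ++ T₂ with hL
  have hlen : T.length = L.length + 1 := by simp [hT, hL]; omega
  rcases eq_or_lt_of_le hn with h1 | h2
  · -- n = 1
    have hL0 : L.length = 0 := by omega
    have hLnil : L = [] := List.length_eq_zero_iff.mp hL0
    obtain ⟨hT1, hT2⟩ := List.append_eq_nil_iff.mp (hL ▸ hLnil)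
    have hTc : T = [c] := by simp [hT, hT1, hT2]
    have hterm : ∀ d : A, ((T.count d : ℝ) / T.length) *
        Real.logb 2 ((T.count d : ℝ) / T.length) = 0 := by
      intro d
      rcases eq_or_ne d c with h | h
      · subst h; simp [hTc]
      · rw [hTc]
        rw [List.count_eq_zero_of_not_mem (by simp [h])]
        simp
    have hH0T : H0 T = 0 := by
      rw [H0, Finset.sum_eq_zero fun d _ => hterm d, neg_zero]
    have hH0L : H0 L = 0 := by
      rw [H0]; simp [hLnil]
    rw [hH0T, hH0L, ← h1]
    simp
    positivity
  · -- n ≥ 2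
    have hn2 : 2 ≤ T.length := h2
    have hLpos : L.length ≠ 0 := by omega
    have hcast : (L.length : ℝ) = (T.length : ℝ) - 1 := by
      rw [hlen]; push_cast; ring
    set n := T.length with hnn
    set k := T.count c with hk
    have hk1 : 1 ≤ k := by
      rw [hk, hT]
      exact List.count_pos_iff.mpr (by simp)
    have hkn : k ≤ n := List.count_le_length
    have hcount : ∀ d : A, T.count d = L.count d + if d = c then 1 else 0 := by
      intro d
      rcases eq_or_ne d c with h | h
      · simp [hT, hL, h, List.count_append, List.count_cons]; omega
      · simp [hT, hL, h, List.count_append, List.count_cons, Ne.symm h]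
    have hcountc : L.count c = k - 1 := by
      have h5 := hcount c
      simp at h5
      omega
    have hcastk : (L.count c : ℝ) = (k : ℝ) - 1 := by
      rw [hcountc]
      have : (1:ℕ) ≤ k := hk1
      push_cast [this]
      ring
    rw [nH0_eq T (by omega), ← hcast, nH0_eq L hLpos, hcast]
    have hsum : ∑ d : A, (T.count d : ℝ) * Real.logb 2 (T.count d) -
        ∑ d : A, (L.count d : ℝ) * Real.logb 2 (L.count d) =
        (k : ℝ) * Real.logb 2 k - ((k : ℝ) - 1) * Real.logb 2 ((k : ℝ) - 1) := by
      rw [← Finset.sum_sub_distrib]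
      rw [Finset.sum_eq_single c]
      · rw [← hk, hcastk]
      · intro d _ hd
        have h6 : T.count d = L.count d := by rw [hcount d]; simp [hd]
        rw [h6]; ring
      · intro h; exact absurd (Finset.mem_univ c) h
    have hexpand : (n : ℝ) * Real.logb 2 n - ∑ d : A, (T.count d : ℝ) * Real.logb 2 (T.count d) -
        (((n : ℝ) - 1) * Real.logb 2 ((n : ℝ) - 1) -
          ∑ d : A, (L.count d : ℝ) * Real.logb 2 (L.count d)) =
        ((n : ℝ) * Real.logb 2 n - ((n : ℝ) - 1) * Real.logb 2 ((n : ℝ) - 1)) -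
        ((k : ℝ) * Real.logb 2 k - ((k : ℝ) - 1) * Real.logb 2 ((k : ℝ) - 1)) := by
      rw [← hsum]; ring
    rw [hexpand]
    have hgn0 := g_nonneg n (by omega)
    have hgk0 := g_nonneg k hk1
    have hgn := g_le n (by omega)
    have hgk := g_le k hk1
    have hmono : Real.logb 2 (k : ℝ) ≤ Real.logb 2 (n : ℝ) :=
      Real.logb_le_logb_of_le (by norm_num) (by exact_mod_cast hk1) (by exact_mod_cast hkn)
    have hlogn : 1 ≤ Real.logb 2 (n : ℝ) := by
      rw [show (1:ℝ) = Real.logb 2 2 by simp]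
      exact Real.logb_le_logb_of_le (by norm_num) (by norm_num) (by exact_mod_cast hn2)
    rw [abs_sub_le_iff]
    constructor <;> nlinarith
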